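/- Let H be a function from F_{q^n} to F_{q^n}. The set P_H = {γ ∈ F_{q^n} : x + γ·Tr(H(x)) permutes F_{q^n}} equals all of F_{q^n} if and only if the map x ↦ Tr(H(x)) is constant on F_{q^n}. -/

import Mathlib

/-- The trace-like map `x ↦ ∑_{i<n} x^(q^i)` from `F_{q^n}` to `F_q`. -/
def fieldTrace (q n : ℕ) {F : Type*} [Field F] (x : F) : F :=
  ∑ i ∈ Finset.range n, x ^ q ^ i

theorem stmt_1 (p m n : ℕ) (hp : p.Prime) (hm : 0 < m) (hn : 0 < n)
    (F : Type*) [Field F] [Fintype F] (hF : Fintype.card F = (p ^ m) ^ n)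
    (H : F → F) :
    (∀ γ : F, Function.Bijective (fun x : F => x + γ * fieldTrace (p ^ m) n (H x))) ↔
      ∃ c : F, ∀ x : F, fieldTrace (p ^ m) n (H x) = c := by
  set T : F → F := fun x => fieldTrace (p ^ m) n (H x) with hT
  constructor
  · intro h
    refine ⟨T 0, fun x => ?_⟩
    by_contra hne
    have hsub : T 0 - T x ≠ 0 := sub_ne_zero.mpr fun e => hne e.symm
    set γ : F := x / (T 0 - T x) with hγ
    have hcol : x + γ * T x = 0 + γ * T 0 := by
      rw [hγ]; field_simp
      ring
    have := (h γ).injective hcol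
    exact hne (by rw [this])
  · rintro ⟨c, hc⟩ γ
    have : (fun x : F => x + γ * T x) = fun x : F => x + γ * c := by
      funext x; simp only [hT]; rw [hc]
    rw [this]
    exact (Equiv.addRight (γ * c)).bijective
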